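/- arXiv:2104.11659 — 4 statements merged into one kernel-verified Lean document; each statement's English description precedes it below -/
import Mathlib

section
/- Let Ω ⊆ ℝ² be open, u : Ω → ℝ three times continuously differentiable, f : Ω → ℝ continuously differentiable, with f ≠ 0 and u_yy ≠ 0 everywhere on Ω and u_xx·u_yy − u_xy² + f² = 0 on Ω. Define a := (−u_xy + f)/u_yy and b := (−u_xy − f)/u_yy on Ω. Then at every point of Ω the directional derivative of b along the α-characteristic direction satisfies b_x + a·b_y = −(f_x + b·f_y)/u_yy = ((b − a)/(2·f))·(f_x + b·f_y). -/
open Filter Topology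

/-- Partial derivative in the `x`-direction of a function of two real variables. -/
noncomputable def pdx (g : ℝ × ℝ → ℝ) (z : ℝ × ℝ) : ℝ := fderiv ℝ g z (1, 0)

/-- Partial derivative in the `y`-direction of a function of two real variables. -/
noncomputable def pdy (g : ℝ × ℝ → ℝ) (z : ℝ × ℝ) : ℝ := fderiv ℝ g z (0, 1)

/-- Slope `a = (−u_xy + f)/u_yy` of the α-characteristics of the hyperbolic
Monge–Ampère equation. -/
noncomputable def slopeA (u f : ℝ × ℝ → ℝ) (z : ℝ × ℝ) : ℝ :=
  (-(pdy (pdx u) z) + f z) / pdy (pdy u) z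

/-- Slope `b = (−u_xy − f)/u_yy` of the β-characteristics of the hyperbolic
Monge–Ampère equation. -/
noncomputable def slopeB (u f : ℝ × ℝ → ℝ) (z : ℝ × ℝ) : ℝ :=
  (-(pdy (pdx u) z) - f z) / pdy (pdy u) z

private lemma algebra_step (s t fz fx fy r sx tx ty bx by' a b : ℝ)
    (ht0 : t ≠ 0) (hf0 : fz ≠ 0)
    (ha : a = (-s + fz) / t) (hb : b = (-s - fz) / t)
    (hMA : r * t - s ^ 2 + fz ^ 2 = 0)
    (hMAy : r * ty + t * sx - 2 * s * tx + 2 * fz * fy = 0)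
    (e1 : t * bx + b * tx + sx + fx = 0)
    (e2 : t * by' + b * ty + tx + fy = 0) :
    bx + a * by' = -((fx + b * fy) / t) ∧
    bx + a * by' = ((b - a) / (2 * fz)) * (fx + b * fy) := by
  subst ha hb
  field_simp at e1 e2
  have hbx : bx = (-((-s - fz) * tx) - t * sx - t * fx) / t ^ 2 := by
    field_simp
    linear_combination e1
  have hby : by' = (-((-s - fz) * ty) - t * tx - t * fy) / t ^ 2 := by
    field_simp
    linear_combination e2
  subst hbx hby
  have hsx : sx = (2 * s * tx - r * ty - 2 * fz * fy) / t := by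
    field_simp
    linear_combination hMAy
  subst hsx
  have hr : r = (s ^ 2 - fz ^ 2) / t := by
    field_simp
    linear_combination hMA
  subst hr
  constructor
  · field_simp
    ring
  · field_simp
    ring

private lemma diffAt_of_cdOn {F : Type*} [NormedAddCommGroup F] [NormedSpace ℝ F]
    {g : ℝ × ℝ → F} {Ω : Set (ℝ × ℝ)} (hΩ : IsOpen Ω) {z : ℝ × ℝ} (hz : z ∈ Ω)
    (hg : ContDiffOn ℝ 1 g Ω) : DifferentiableAt ℝ g z :=
  ((hg.differentiableOn one_ne_zero) z hz).differentiableAt (hΩ.mem_nhds hz)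

private lemma pd_eval_swap {g : ℝ × ℝ → ℝ} {z : ℝ × ℝ}
    (hg : DifferentiableAt ℝ (fderiv ℝ g) z) (v w : ℝ × ℝ) :
    fderiv ℝ (fun y => fderiv ℝ g y v) z w = fderiv ℝ (fderiv ℝ g) z w v := by
  rw [fderiv_clm_apply hg (differentiableAt_const v)]
  simp

/-- Evolution of the slope `b` of the β-characteristic family along the
α-characteristics of the hyperbolic Monge–Ampère equation:
`b_x + a·b_y = −(f_x + b·f_y)/u_yy = ((b − a)/(2f))·(f_x + b·f_y)`. -/
theorem monge_ampere_evolution_b_along_alpha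
    (Ω : Set (ℝ × ℝ)) (hΩ : IsOpen Ω)
    (u f : ℝ × ℝ → ℝ)
    (hu : ContDiffOn ℝ 3 u Ω) (hf : ContDiffOn ℝ 1 f Ω)
    (hf0 : ∀ z ∈ Ω, f z ≠ 0) (ht : ∀ z ∈ Ω, pdy (pdy u) z ≠ 0)
    (hMA : ∀ z ∈ Ω, pdx (pdx u) z * pdy (pdy u) z - pdy (pdx u) z ^ 2 + f z ^ 2 = 0) :
    ∀ z ∈ Ω,
      pdx (slopeB u f) z + slopeA u f z * pdy (slopeB u f) z =
        -((pdx f z + slopeB u f z * pdy f z) / pdy (pdy u) z) ∧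
      pdx (slopeB u f) z + slopeA u f z * pdy (slopeB u f) z =
        ((slopeB u f z - slopeA u f z) / (2 * f z)) *
          (pdx f z + slopeB u f z * pdy f z) := by
  intro z hz
  have hmem : Ω ∈ 𝓝 z := hΩ.mem_nhds hz
  have hfdu : ContDiffOn ℝ 2 (fderiv ℝ u) Ω := hu.fderiv_of_isOpen hΩ (by norm_num)
  have hg1 : ContDiffOn ℝ 2 (fun w => fderiv ℝ u w (1, 0)) Ω := hfdu.clm_apply contDiffOn_const
  have hg2 : ContDiffOn ℝ 2 (fun w => fderiv ℝ u w (0, 1)) Ω := hfdu.clm_apply contDiffOn_const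
  have hfdg1 : ContDiffOn ℝ 1 (fderiv ℝ (fun w => fderiv ℝ u w ((1 : ℝ), (0 : ℝ)))) Ω :=
    hg1.fderiv_of_isOpen hΩ (by norm_num)
  have hfdg2 : ContDiffOn ℝ 1 (fderiv ℝ (fun w => fderiv ℝ u w ((0 : ℝ), (1 : ℝ)))) Ω :=
    hg2.fderiv_of_isOpen hΩ (by norm_num)
  have hsymm1 : IsSymmSndFDerivAt ℝ (fun w => fderiv ℝ u w ((1 : ℝ), (0 : ℝ))) z :=
    (hg1.contDiffAt hmem).isSymmSndFDerivAt (by norm_num)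
  have hsymm2 : IsSymmSndFDerivAt ℝ (fun w => fderiv ℝ u w ((0 : ℝ), (1 : ℝ))) z :=
    (hg2.contDiffAt hmem).isSymmSndFDerivAt (by norm_num)
  have hsymmu : ∀ w ∈ Ω, IsSymmSndFDerivAt ℝ u w := fun w hw =>
    (hu.contDiffAt (hΩ.mem_nhds hw)).isSymmSndFDerivAt (by norm_num)
  have hdg1 : DifferentiableAt ℝ (fderiv ℝ (fun w => fderiv ℝ u w ((1:ℝ), (0:ℝ)))) z :=
    diffAt_of_cdOn hΩ hz hfdg1
  have hdg2 : DifferentiableAt ℝ (fderiv ℝ (fun w => fderiv ℝ u w ((0:ℝ), (1:ℝ)))) z :=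
    diffAt_of_cdOn hΩ hz hfdg2
  -- second-order derivative functions (as C¹ functions on Ω)
  have hRc : ContDiffOn ℝ 1 (fun w => fderiv ℝ (fun w' => fderiv ℝ u w' ((1:ℝ), (0:ℝ))) w (1, 0)) Ω :=
    hfdg1.clm_apply contDiffOn_const
  have hSc : ContDiffOn ℝ 1 (fun w => fderiv ℝ (fun w' => fderiv ℝ u w' ((1:ℝ), (0:ℝ))) w (0, 1)) Ω :=
    hfdg1.clm_apply contDiffOn_const
  have hTc : ContDiffOn ℝ 1 (fun w => fderiv ℝ (fun w' => fderiv ℝ u w' ((0:ℝ), (1:ℝ))) w (0, 1)) Ω :=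
    hfdg2.clm_apply contDiffOn_const
  have hdR : DifferentiableAt ℝ (fun w => fderiv ℝ (fun w' => fderiv ℝ u w' ((1:ℝ), (0:ℝ))) w (1, 0)) z :=
    diffAt_of_cdOn hΩ hz hRc
  have hdS : DifferentiableAt ℝ (fun w => fderiv ℝ (fun w' => fderiv ℝ u w' ((1:ℝ), (0:ℝ))) w (0, 1)) z :=
    diffAt_of_cdOn hΩ hz hSc
  have hdT : DifferentiableAt ℝ (fun w => fderiv ℝ (fun w' => fderiv ℝ u w' ((0:ℝ), (1:ℝ))) w (0, 1)) z :=
    diffAt_of_cdOn hΩ hz hTc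
  have hdf : DifferentiableAt ℝ f z := diffAt_of_cdOn hΩ hz hf
  -- Clairaut identities
  have hsx_ry : fderiv ℝ (fun w => fderiv ℝ (fun w' => fderiv ℝ u w' (1, 0)) w (0, 1)) z (1, 0)
      = fderiv ℝ (fun w => fderiv ℝ (fun w' => fderiv ℝ u w' (1, 0)) w (1, 0)) z (0, 1) := by
    rw [pd_eval_swap hdg1, pd_eval_swap hdg1]
    exact (hsymm1.eq _ _).symm
  have hST : (fun w => fderiv ℝ (fun w' => fderiv ℝ u w' ((1:ℝ), (0:ℝ))) w ((0:ℝ), (1:ℝ)))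
      =ᶠ[𝓝 z] (fun w => fderiv ℝ (fun w' => fderiv ℝ u w' ((0:ℝ), (1:ℝ))) w ((1:ℝ), (0:ℝ))) := by
    filter_upwards [hmem] with w hw
    have hdu : DifferentiableAt ℝ (fderiv ℝ u) w :=
      diffAt_of_cdOn hΩ hw (hfdu.of_le one_le_two)
    rw [pd_eval_swap hdu, pd_eval_swap hdu]
    exact ((hsymmu w hw).eq _ _)
  have hsy_tx : fderiv ℝ (fun w => fderiv ℝ (fun w' => fderiv ℝ u w' (1, 0)) w (0, 1)) z (0, 1)
      = fderiv ℝ (fun w => fderiv ℝ (fun w' => fderiv ℝ u w' (0, 1)) w (0, 1)) z (1, 0) := by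
    rw [hST.fderiv_eq, pd_eval_swap hdg2, pd_eval_swap hdg2]
    exact (hsymm2.eq _ _).symm
  -- y-derivative of the Monge–Ampère identity
  have hGder := ((hdR.hasFDerivAt.mul hdT.hasFDerivAt).sub
      (hdS.hasFDerivAt.mul hdS.hasFDerivAt)).add (hdf.hasFDerivAt.mul hdf.hasFDerivAt)
  have hGfun : (fun w => (fun w => fderiv ℝ (fun w' => fderiv ℝ u w' ((1:ℝ), (0:ℝ))) w ((1:ℝ), (0:ℝ))) w *
        (fun w => fderiv ℝ (fun w' => fderiv ℝ u w' ((0:ℝ), (1:ℝ))) w ((0:ℝ), (1:ℝ))) w -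
        (fun w => fderiv ℝ (fun w' => fderiv ℝ u w' ((1:ℝ), (0:ℝ))) w ((0:ℝ), (1:ℝ))) w *
        (fun w => fderiv ℝ (fun w' => fderiv ℝ u w' ((1:ℝ), (0:ℝ))) w ((0:ℝ), (1:ℝ))) w +
        f w * f w) =ᶠ[𝓝 z] (fun _ => (0 : ℝ)) := by
    filter_upwards [hmem] with w hw
    have := hMA w hw
    simp only [pow_two] at this
    exact this
  have hGD := hGder.fderiv.symm.trans (by exact hGfun.fderiv_eq.trans (by simp) :
      fderiv ℝ _ z = (0 : (ℝ × ℝ) →L[ℝ] ℝ))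
  have h := congrArg (fun (L : (ℝ × ℝ) →L[ℝ] ℝ) => L ((0:ℝ),(1:ℝ))) hGD
  simp only [ContinuousLinearMap.add_apply, ContinuousLinearMap.sub_apply,
    ContinuousLinearMap.smul_apply, ContinuousLinearMap.zero_apply, smul_eq_mul] at h
  -- the characteristic-slope function b and the identity t·b + s + f = 0
  have hdB : DifferentiableAt ℝ (slopeB u f) z := by
    have : DifferentiableAt ℝ (fun w =>
        (-(fderiv ℝ (fun w' => fderiv ℝ u w' ((1:ℝ),(0:ℝ))) w ((0:ℝ),(1:ℝ))) - f w) /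
          (fderiv ℝ (fun w' => fderiv ℝ u w' ((0:ℝ),(1:ℝ))) w ((0:ℝ),(1:ℝ)))) z := by
      simp only [div_eq_mul_inv]
      exact (hdS.neg.sub hdf).mul (hdT.inv (ht z hz))
    exact this
  have hHder := ((hdT.hasFDerivAt.mul hdB.hasFDerivAt).add hdS.hasFDerivAt).add hdf.hasFDerivAt
  have hHfun : (fun w =>
      fderiv ℝ (fun w' => fderiv ℝ u w' ((0:ℝ),(1:ℝ))) w ((0:ℝ),(1:ℝ)) * slopeB u f w +
      fderiv ℝ (fun w' => fderiv ℝ u w' ((1:ℝ),(0:ℝ))) w ((0:ℝ),(1:ℝ)) + f w)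
      =ᶠ[𝓝 z] (fun _ => (0:ℝ)) := by
    filter_upwards [hmem] with w hw
    have hb : slopeB u f w =
        (-(fderiv ℝ (fun w' => fderiv ℝ u w' ((1:ℝ),(0:ℝ))) w ((0:ℝ),(1:ℝ))) - f w) /
          fderiv ℝ (fun w' => fderiv ℝ u w' ((0:ℝ),(1:ℝ))) w ((0:ℝ),(1:ℝ)) := rfl
    have htw : fderiv ℝ (fun w' => fderiv ℝ u w' ((0:ℝ),(1:ℝ))) w ((0:ℝ),(1:ℝ)) ≠ 0 := ht w hw
    rw [hb]
    field_simp
    ring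
  have hHD := hHder.fderiv.symm.trans (by exact hHfun.fderiv_eq.trans (by simp) :
      fderiv ℝ _ z = (0 : (ℝ × ℝ) →L[ℝ] ℝ))
  have hE1 := congrArg (fun (L : (ℝ × ℝ) →L[ℝ] ℝ) => L ((1:ℝ),(0:ℝ))) hHD
  have hE2 := congrArg (fun (L : (ℝ × ℝ) →L[ℝ] ℝ) => L ((0:ℝ),(1:ℝ))) hHD
  simp only [ContinuousLinearMap.add_apply, ContinuousLinearMap.sub_apply,
    ContinuousLinearMap.smul_apply, ContinuousLinearMap.zero_apply, smul_eq_mul] at hE1 hE2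
  -- normalize everything to raw `fderiv` atoms
  have hpdxu : pdx u = fun w => fderiv ℝ u w ((1:ℝ),(0:ℝ)) := rfl
  have hpdyu : pdy u = fun w => fderiv ℝ u w ((0:ℝ),(1:ℝ)) := rfl
  have hbz : slopeB u f z =
      (-(fderiv ℝ (fun w' => fderiv ℝ u w' ((1:ℝ),(0:ℝ))) z ((0:ℝ),(1:ℝ))) - f z) /
        fderiv ℝ (fun w' => fderiv ℝ u w' ((0:ℝ),(1:ℝ))) z ((0:ℝ),(1:ℝ)) := rfl
  rw [hbz] at hE1 hE2
  simp only [slopeA, slopeB, pdx, pdy, hpdxu, hpdyu]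
  have hMA' : fderiv ℝ (fun w' => fderiv ℝ u w' ((1:ℝ),(0:ℝ))) z ((1:ℝ),(0:ℝ)) *
      fderiv ℝ (fun w' => fderiv ℝ u w' ((0:ℝ),(1:ℝ))) z ((0:ℝ),(1:ℝ)) -
      fderiv ℝ (fun w' => fderiv ℝ u w' ((1:ℝ),(0:ℝ))) z ((0:ℝ),(1:ℝ)) ^ 2 + f z ^ 2 = 0 :=
    hMA z hz
  have hMAy : fderiv ℝ (fun w' => fderiv ℝ u w' ((1:ℝ),(0:ℝ))) z ((1:ℝ),(0:ℝ)) *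
        fderiv ℝ (fun w => fderiv ℝ (fun w' => fderiv ℝ u w' ((0:ℝ),(1:ℝ))) w ((0:ℝ),(1:ℝ))) z ((0:ℝ),(1:ℝ)) +
      fderiv ℝ (fun w' => fderiv ℝ u w' ((0:ℝ),(1:ℝ))) z ((0:ℝ),(1:ℝ)) *
        fderiv ℝ (fun w => fderiv ℝ (fun w' => fderiv ℝ u w' ((1:ℝ),(0:ℝ))) w ((0:ℝ),(1:ℝ))) z ((1:ℝ),(0:ℝ)) -
      2 * fderiv ℝ (fun w' => fderiv ℝ u w' ((1:ℝ),(0:ℝ))) z ((0:ℝ),(1:ℝ)) *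
        fderiv ℝ (fun w => fderiv ℝ (fun w' => fderiv ℝ u w' ((0:ℝ),(1:ℝ))) w ((0:ℝ),(1:ℝ))) z ((1:ℝ),(0:ℝ)) +
      2 * f z * fderiv ℝ f z ((0:ℝ),(1:ℝ)) = 0 := by
    linear_combination h +
      fderiv ℝ (fun w' => fderiv ℝ u w' ((0:ℝ),(1:ℝ))) z ((0:ℝ),(1:ℝ)) * hsx_ry +
      2 * fderiv ℝ (fun w' => fderiv ℝ u w' ((1:ℝ),(0:ℝ))) z ((0:ℝ),(1:ℝ)) * hsy_tx
  have e1 : fderiv ℝ (fun w' => fderiv ℝ u w' ((0:ℝ),(1:ℝ))) z ((0:ℝ),(1:ℝ)) *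
        fderiv ℝ (slopeB u f) z ((1:ℝ),(0:ℝ)) +
      ((-(fderiv ℝ (fun w' => fderiv ℝ u w' ((1:ℝ),(0:ℝ))) z ((0:ℝ),(1:ℝ))) - f z) /
        fderiv ℝ (fun w' => fderiv ℝ u w' ((0:ℝ),(1:ℝ))) z ((0:ℝ),(1:ℝ))) *
        fderiv ℝ (fun w => fderiv ℝ (fun w' => fderiv ℝ u w' ((0:ℝ),(1:ℝ))) w ((0:ℝ),(1:ℝ))) z ((1:ℝ),(0:ℝ)) +
      fderiv ℝ (fun w => fderiv ℝ (fun w' => fderiv ℝ u w' ((1:ℝ),(0:ℝ))) w ((0:ℝ),(1:ℝ))) z ((1:ℝ),(0:ℝ)) +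
      fderiv ℝ f z ((1:ℝ),(0:ℝ)) = 0 := by
    linear_combination hE1
  have e2 : fderiv ℝ (fun w' => fderiv ℝ u w' ((0:ℝ),(1:ℝ))) z ((0:ℝ),(1:ℝ)) *
        fderiv ℝ (slopeB u f) z ((0:ℝ),(1:ℝ)) +
      ((-(fderiv ℝ (fun w' => fderiv ℝ u w' ((1:ℝ),(0:ℝ))) z ((0:ℝ),(1:ℝ))) - f z) /
        fderiv ℝ (fun w' => fderiv ℝ u w' ((0:ℝ),(1:ℝ))) z ((0:ℝ),(1:ℝ))) *
        fderiv ℝ (fun w => fderiv ℝ (fun w' => fderiv ℝ u w' ((0:ℝ),(1:ℝ))) w ((0:ℝ),(1:ℝ))) z ((0:ℝ),(1:ℝ)) +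
      fderiv ℝ (fun w => fderiv ℝ (fun w' => fderiv ℝ u w' ((0:ℝ),(1:ℝ))) w ((0:ℝ),(1:ℝ))) z ((1:ℝ),(0:ℝ)) +
      fderiv ℝ f z ((0:ℝ),(1:ℝ)) = 0 := by
    linear_combination hE2 - hsy_tx
  exact algebra_step _ _ _ _ _ _ _ _ _ _ _ _ _ (ht z hz) (hf0 z hz) rfl rfl hMA' hMAy e1 e2
end

section
/- Let Ω ⊆ ℝ² be open, u : Ω → ℝ three times continuously differentiable, f : Ω → ℝ continuously differentiable, with f ≠ 0 and u_yy ≠ 0 everywhere on Ω and u_xx·u_yy − u_xy² + f² = 0 on Ω. Define a := (−u_xy + f)/u_yy and b := (−u_xy − f)/u_yy on Ω. Then at every point of Ω the directional derivative of a along the β-characteristic direction satisfies a_x + b·a_y = (f_x + a·f_y)/u_yy = ((a − b)/(2·f))·(f_x + a·f_y). -/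
lemma hasDerivAt_line {g : ℝ × ℝ → ℝ} {z : ℝ × ℝ} (v : ℝ × ℝ)
    (hg : DifferentiableAt ℝ g z) :
    HasDerivAt (fun h : ℝ => g (z + h • v)) (fderiv ℝ g z v) 0 := by
  have hl : HasDerivAt (fun h : ℝ => z + h • v) v 0 := by
    simpa using ((hasDerivAt_id (0 : ℝ)).smul_const v).const_add z
  have hg' : HasFDerivAt g (fderiv ℝ g z) ((fun h : ℝ => z + h • v) 0) := by
    simpa using hg.hasFDerivAt
  exact hg'.comp_hasDerivAt 0 hl

lemma contDiffOn_pd {n : ℕ} {g : ℝ × ℝ → ℝ} {Ω : Set (ℝ × ℝ)} (hΩ : IsOpen Ω)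
    (hg : ContDiffOn ℝ (n + 1) g Ω) (v : ℝ × ℝ) :
    ContDiffOn ℝ n (fun z => fderiv ℝ g z v) Ω :=
  (ContinuousLinearMap.apply ℝ ℝ v).contDiff.comp_contDiffOn
    (hg.fderiv_of_isOpen hΩ (by norm_cast))

lemma clairaut_at {g : ℝ × ℝ → ℝ} {Ω : Set (ℝ × ℝ)} (hΩ : IsOpen Ω)
    (hg : ContDiffOn ℝ 2 g Ω) {z : ℝ × ℝ} (hz : z ∈ Ω) (v w : ℝ × ℝ) :
    fderiv ℝ (fun x => fderiv ℝ g x v) z w = fderiv ℝ (fun x => fderiv ℝ g x w) z v := by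
  have hnhds : Ω ∈ nhds z := hΩ.mem_nhds hz
  have hd : DifferentiableAt ℝ (fderiv ℝ g) z := by
    have h1 : ContDiffOn ℝ 1 (fderiv ℝ g) Ω := hg.fderiv_of_isOpen hΩ (by norm_num)
    exact (h1.contDiffAt hnhds).differentiableAt one_ne_zero
  have hsymm : IsSymmSndFDerivAt ℝ g z :=
    (hg.contDiffAt hnhds).isSymmSndFDerivAt (by simp)
  rw [fderiv_clm_apply hd (differentiableAt_const v),
    fderiv_clm_apply hd (differentiableAt_const w)]
  simp [hsymm.eq v w]

lemma fderiv_quot {p q : ℝ × ℝ → ℝ} {z : ℝ × ℝ} (v : ℝ × ℝ)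
    (hp : DifferentiableAt ℝ p z) (hq : DifferentiableAt ℝ q z) (hq0 : q z ≠ 0) :
    fderiv ℝ (fun w => p w / q w) z v =
      (fderiv ℝ p z v * q z - p z * fderiv ℝ q z v) / q z ^ 2 := by
  have hpq : DifferentiableAt ℝ (fun w => p w / q w) z := hp.mul (hq.inv hq0)
  have h1 := hasDerivAt_line v hpq
  have h2 := (hasDerivAt_line v hp).div (hasDerivAt_line v hq) (by simpa using hq0)
  simp only [zero_smul, add_zero] at h2
  exact h1.unique h2

lemma fderiv_negadd {p q : ℝ × ℝ → ℝ} {z : ℝ × ℝ} (v : ℝ × ℝ)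
    (hp : DifferentiableAt ℝ p z) (hq : DifferentiableAt ℝ q z) :
    fderiv ℝ (fun w => -(p w) + q w) z v = -(fderiv ℝ p z v) + fderiv ℝ q z v := by
  have h1 := hasDerivAt_line v (hp.neg.add hq)
  have h2 := (hasDerivAt_line v hp).neg.add (hasDerivAt_line v hq)
  exact h1.unique h2

lemma fderiv_MA_comb {R T S F : ℝ × ℝ → ℝ} {z : ℝ × ℝ} (v : ℝ × ℝ)
    (hR : DifferentiableAt ℝ R z) (hT : DifferentiableAt ℝ T z)
    (hS : DifferentiableAt ℝ S z) (hF : DifferentiableAt ℝ F z) :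
    fderiv ℝ (fun w => R w * T w - S w ^ 2 + F w ^ 2) z v
      = fderiv ℝ R z v * T z + R z * fderiv ℝ T z v
        - 2 * S z * fderiv ℝ S z v + 2 * F z * fderiv ℝ F z v := by
  have hG : DifferentiableAt ℝ (fun w => R w * T w - S w ^ 2 + F w ^ 2) z :=
    ((hR.mul hT).sub (hS.pow 2)).add (hF.pow 2)
  have h1 := hasDerivAt_line v hG
  have h2 := (((hasDerivAt_line v hR).mul (hasDerivAt_line v hT)).sub
    ((hasDerivAt_line v hS).pow 2)).add ((hasDerivAt_line v hF).pow 2)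
  simp only [zero_smul, add_zero] at h2
  rw [h1.unique h2]; ring

lemma algebra_key (r s t fz sy ty fx fy ry : ℝ)
    (ht : t ≠ 0)
    (hMA : r * t - s ^ 2 + fz ^ 2 = 0)
    (hMAy : ry * t + r * ty - 2 * s * sy + 2 * fz * fy = 0) :
    ((-ry + fx) * t - (-s + fz) * sy) / t ^ 2
      + ((-s - fz) / t) * (((-sy + fy) * t - (-s + fz) * ty) / t ^ 2)
    = (fx + ((-s + fz) / t) * fy) / t := by
  field_simp
  ring_nf
  linear_combination (-t) * hMAy + ty * hMA

lemma algebra_key2 (s t fz X : ℝ) (ht : t ≠ 0) (hf : fz ≠ 0) :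
    X / t = ((-s + fz) / t - (-s - fz) / t) / (2 * fz) * X := by
  field_simp
  ring

/-- Evolution of the slope `a` of the α-characteristic family along the
β-characteristics of the hyperbolic Monge–Ampère equation:
`a_x + b·a_y = (f_x + a·f_y)/u_yy = ((a − b)/(2f))·(f_x + a·f_y)`. -/
theorem monge_ampere_evolution_a_along_beta
    (Ω : Set (ℝ × ℝ)) (hΩ : IsOpen Ω)
    (u f : ℝ × ℝ → ℝ)
    (hu : ContDiffOn ℝ 3 u Ω) (hf : ContDiffOn ℝ 1 f Ω)
    (hf0 : ∀ z ∈ Ω, f z ≠ 0) (ht : ∀ z ∈ Ω, pdy (pdy u) z ≠ 0)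
    (hMA : ∀ z ∈ Ω, pdx (pdx u) z * pdy (pdy u) z - pdy (pdx u) z ^ 2 + f z ^ 2 = 0) :
    ∀ z ∈ Ω,
      pdx (slopeA u f) z + slopeB u f z * pdy (slopeA u f) z =
        (pdx f z + slopeA u f z * pdy f z) / pdy (pdy u) z ∧
      pdx (slopeA u f) z + slopeB u f z * pdy (slopeA u f) z =
        ((slopeA u f z - slopeB u f z) / (2 * f z)) *
          (pdx f z + slopeA u f z * pdy f z) := by
  intro z hz
  have hnz : Ω ∈ nhds z := hΩ.mem_nhds hz
  -- smoothness of the second derivatives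
  have hu3 : ContDiffOn ℝ ((2 : ℕ) + 1) u Ω := by exact_mod_cast hu
  have hu2 : ContDiffOn ℝ 2 u Ω := hu.of_le (by norm_num)
  have hux : ContDiffOn ℝ ((1 : ℕ) + 1) (pdx u) Ω := by
    exact_mod_cast contDiffOn_pd hΩ hu3 (1, 0)
  have huy : ContDiffOn ℝ ((1 : ℕ) + 1) (pdy u) Ω := by
    exact_mod_cast contDiffOn_pd hΩ hu3 (0, 1)
  have hS : ContDiffOn ℝ 1 (pdy (pdx u)) Ω := by
    exact_mod_cast contDiffOn_pd hΩ hux (0, 1)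
  have hT : ContDiffOn ℝ 1 (pdy (pdy u)) Ω := by
    exact_mod_cast contDiffOn_pd hΩ huy (0, 1)
  have hR : ContDiffOn ℝ 1 (pdx (pdx u)) Ω := by
    exact_mod_cast contDiffOn_pd hΩ hux (1, 0)
  have dS : DifferentiableAt ℝ (pdy (pdx u)) z :=
    (hS.contDiffAt hnz).differentiableAt one_ne_zero
  have dT : DifferentiableAt ℝ (pdy (pdy u)) z :=
    (hT.contDiffAt hnz).differentiableAt one_ne_zero
  have dR : DifferentiableAt ℝ (pdx (pdx u)) z :=
    (hR.contDiffAt hnz).differentiableAt one_ne_zero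
  have df : DifferentiableAt ℝ f z :=
    (hf.contDiffAt hnz).differentiableAt one_ne_zero
  have dP : DifferentiableAt ℝ (fun w => -(pdy (pdx u) w) + f w) z := dS.neg.add df
  have hT0 : pdy (pdy u) z ≠ 0 := ht z hz
  -- derivatives of slopeA
  have hax : pdx (slopeA u f) z =
      ((-(pdx (pdy (pdx u)) z) + pdx f z) * pdy (pdy u) z
        - (-(pdy (pdx u) z) + f z) * pdx (pdy (pdy u)) z) / pdy (pdy u) z ^ 2 := by
    have := fderiv_quot (p := fun w => -(pdy (pdx u) w) + f w) (q := pdy (pdy u))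
      (1, 0) dP dT hT0
    rw [fderiv_negadd (1, 0) dS df] at this
    exact this
  have hay : pdy (slopeA u f) z =
      ((-(pdy (pdy (pdx u)) z) + pdy f z) * pdy (pdy u) z
        - (-(pdy (pdx u) z) + f z) * pdy (pdy (pdy u)) z) / pdy (pdy u) z ^ 2 := by
    have := fderiv_quot (p := fun w => -(pdy (pdx u) w) + f w) (q := pdy (pdy u))
      (0, 1) dP dT hT0
    rw [fderiv_negadd (0, 1) dS df] at this
    exact this
  -- Clairaut identities
  have clair1 : pdx (pdy (pdx u)) z = pdy (pdx (pdx u)) z :=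
    clairaut_at hΩ (hux.of_le (by norm_num)) hz (0, 1) (1, 0)
  have clair2 : pdx (pdy (pdy u)) z = pdy (pdy (pdx u)) z := by
    have h1 : pdx (pdy (pdy u)) z = pdy (pdx (pdy u)) z :=
      clairaut_at hΩ (huy.of_le (by norm_num)) hz (0, 1) (1, 0)
    have h2 : pdx (pdy u) =ᶠ[nhds z] pdy (pdx u) := by
      filter_upwards [hnz] with w hw
      exact clairaut_at hΩ hu2 hw (0, 1) (1, 0)
    have h3 : pdy (pdx (pdy u)) z = pdy (pdy (pdx u)) z := by
      show fderiv ℝ (pdx (pdy u)) z (0, 1) = fderiv ℝ (pdy (pdx u)) z (0, 1)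
      rw [h2.fderiv_eq]
    rw [h1, h3]
  -- differentiated Monge–Ampère relation in the y-direction
  have hMAy : pdy (pdx (pdx u)) z * pdy (pdy u) z
      + pdx (pdx u) z * pdy (pdy (pdy u)) z
      - 2 * pdy (pdx u) z * pdy (pdy (pdx u)) z + 2 * f z * pdy f z = 0 := by
    have hE : (fun w => pdx (pdx u) w * pdy (pdy u) w - pdy (pdx u) w ^ 2 + f w ^ 2)
        =ᶠ[nhds z] (fun _ => (0 : ℝ)) := by
      filter_upwards [hnz] with w hw
      exact hMA w hw
    have h0 : fderiv ℝ (fun w => pdx (pdx u) w * pdy (pdy u) w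
        - pdy (pdx u) w ^ 2 + f w ^ 2) z (0, 1) = 0 := by
      rw [hE.fderiv_eq]; simp
    rw [fderiv_MA_comb (0, 1) dR dT dS df] at h0
    exact h0
  have ha : slopeA u f z = (-(pdy (pdx u) z) + f z) / pdy (pdy u) z := rfl
  have hb : slopeB u f z = (-(pdy (pdx u) z) - f z) / pdy (pdy u) z := rfl
  have key := algebra_key (pdx (pdx u) z) (pdy (pdx u) z) (pdy (pdy u) z) (f z)
    (pdy (pdy (pdx u)) z) (pdy (pdy (pdy u)) z) (pdx f z) (pdy f z)
    (pdy (pdx (pdx u)) z) hT0 (hMA z hz) hMAy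
  refine ⟨?_, ?_⟩ <;> rw [hax, hay, clair2, clair1, ha, hb]
  · exact key
  · rw [key]
    exact algebra_key2 (pdy (pdx u) z) (pdy (pdy u) z) (f z) _ hT0 (hf0 z hz)
end

section
/- Let x₁ < x₂ and y₁ < y₂ be real numbers, let U ⊆ ℝ² be an open set containing the closed rectangle [x₁,x₂] × [y₁,y₂], let u : U → ℝ be three times continuously differentiable and f : U → ℝ continuous with u_xx·u_yy − u_xy² + f² = 0 on U. Write p = u_x and q = u_y. Then ∫_{x₁}^{x₂} ∫_{y₁}^{y₂} f(x,y)² dy dx = −( ∫_{x₁}^{x₂} p(x,y₁)·q_x(x,y₁) dx + ∫_{y₁}^{y₂} p(x₂,y)·q_y(x₂,y) dy − ∫_{x₁}^{x₂} p(x,y₂)·q_x(x,y₂) dx − ∫_{y₁}^{y₂} p(x₁,y)·q_y(x₁,y) dy ). -/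
open Set MeasureTheory

lemma pd_contDiffOn {g : ℝ × ℝ → ℝ} {U : Set (ℝ × ℝ)} {m n : WithTop ℕ∞} (hU : IsOpen U)
    (hg : ContDiffOn ℝ n g U) (hmn : m + 1 ≤ n) (v : ℝ × ℝ) :
    ContDiffOn ℝ m (fun z => fderiv ℝ g z v) U :=
  (ContinuousLinearMap.apply ℝ ℝ v).contDiff.comp_contDiffOn
    (hg.fderiv_of_isOpen hU hmn)

lemma hasFDerivAt_pd {g : ℝ × ℝ → ℝ} {U : Set (ℝ × ℝ)} (hU : IsOpen U)
    (hg : ContDiffOn ℝ 2 g U) {z : ℝ × ℝ} (hz : z ∈ U) (v : ℝ × ℝ) :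
    HasFDerivAt (fun w => fderiv ℝ g w v)
      ((ContinuousLinearMap.apply ℝ ℝ v).comp (fderiv ℝ (fderiv ℝ g) z)) z := by
  have h1 : ContDiffOn ℝ 1 (fderiv ℝ g) U := hg.fderiv_of_isOpen hU le_rfl
  have h2 : DifferentiableAt ℝ (fderiv ℝ g) z :=
    (h1.differentiableOn one_ne_zero).differentiableAt (hU.mem_nhds hz)
  exact (ContinuousLinearMap.apply ℝ ℝ v).hasFDerivAt.comp z h2.hasFDerivAt

lemma pd_symm {g : ℝ × ℝ → ℝ} {U : Set (ℝ × ℝ)} (hU : IsOpen U)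
    (hg : ContDiffOn ℝ 2 g U) {z : ℝ × ℝ} (hz : z ∈ U) (v w : ℝ × ℝ) :
    fderiv ℝ (fun z => fderiv ℝ g z v) z w = fderiv ℝ (fun z => fderiv ℝ g z w) z v := by
  have hsymm : IsSymmSndFDerivAt ℝ g z :=
    (hg.contDiffAt (hU.mem_nhds hz)).isSymmSndFDerivAt (by simp)
  rw [(hasFDerivAt_pd hU hg hz v).fderiv, (hasFDerivAt_pd hU hg hz w).fderiv]
  exact hsymm w v


/-- Integral formulation of the hyperbolic Monge–Ampère equation over a
rectangle: `∬ f² = −∮ p·∇q·τ̂ ds`, with `p = u_x`, `q = u_y` and the boundary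
integral taken counterclockwise. -/
theorem monge_ampere_integral_formulation
    (x₁ x₂ y₁ y₂ : ℝ) (hx : x₁ < x₂) (hy : y₁ < y₂)
    (U : Set (ℝ × ℝ)) (hU : IsOpen U)
    (hrect : Set.Icc x₁ x₂ ×ˢ Set.Icc y₁ y₂ ⊆ U)
    (u f : ℝ × ℝ → ℝ) (hu : ContDiffOn ℝ 3 u U) (hf : ContinuousOn f U)
    (hMA : ∀ z ∈ U, pdx (pdx u) z * pdy (pdy u) z - pdy (pdx u) z ^ 2 + f z ^ 2 = 0) :
    (∫ x in x₁..x₂, ∫ y in y₁..y₂, f (x, y) ^ 2) =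
      -((∫ x in x₁..x₂, pdx u (x, y₁) * pdx (pdy u) (x, y₁)) +
        (∫ y in y₁..y₂, pdx u (x₂, y) * pdy (pdy u) (x₂, y)) -
        (∫ x in x₁..x₂, pdx u (x, y₂) * pdx (pdy u) (x, y₂)) -
        (∫ y in y₁..y₂, pdx u (x₁, y) * pdy (pdy u) (x₁, y))) := by
  -- smoothness of the various partial derivatives
  have hP : ContDiffOn ℝ 2 (pdx u) U :=
    pd_contDiffOn hU hu (by norm_num) (1, 0)
  have hQ : ContDiffOn ℝ 2 (pdy u) U :=
    pd_contDiffOn hU hu (by norm_num) (0, 1)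
  have hQX : ContDiffOn ℝ 1 (pdx (pdy u)) U :=
    pd_contDiffOn hU hQ (by norm_num) (1, 0)
  have hQY : ContDiffOn ℝ 1 (pdy (pdy u)) U :=
    pd_contDiffOn hU hQ (by norm_num) (0, 1)
  -- differentiability at points of U
  have hPd : ∀ z ∈ U, DifferentiableAt ℝ (pdx u) z := fun z hz =>
    ((hP.of_le one_le_two).differentiableOn one_ne_zero).differentiableAt (hU.mem_nhds hz)
  have hQXd : ∀ z ∈ U, DifferentiableAt ℝ (pdx (pdy u)) z := fun z hz =>
    (hQX.differentiableOn one_ne_zero).differentiableAt (hU.mem_nhds hz)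
  have hQYd : ∀ z ∈ U, DifferentiableAt ℝ (pdy (pdy u)) z := fun z hz =>
    (hQY.differentiableOn one_ne_zero).differentiableAt (hU.mem_nhds hz)
  -- the two components of the vector field
  set F : ℝ × ℝ → ℝ := fun w => -(pdx u w * pdy (pdy u) w) with hF
  set G : ℝ × ℝ → ℝ := fun w => pdx u w * pdx (pdy u) w with hG
  have hFd : ∀ z ∈ U, DifferentiableAt ℝ F z := fun z hz =>
    (((hPd z hz).mul (hQYd z hz)).neg)
  have hGd : ∀ z ∈ U, DifferentiableAt ℝ G z := fun z hz =>
    ((hPd z hz).mul (hQXd z hz))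
  -- the divergence identity on U
  have key : ∀ z ∈ U, fderiv ℝ F z (1, 0) + fderiv ℝ G z (0, 1) = f z ^ 2 := by
    intro z hz
    have hPz := ((hPd z hz).hasFDerivAt)
    have hQXz := ((hQXd z hz).hasFDerivAt)
    have hQYz := ((hQYd z hz).hasFDerivAt)
    have hFz : HasFDerivAt F
        (-(pdx u z • fderiv ℝ (pdy (pdy u)) z + pdy (pdy u) z • fderiv ℝ (pdx u) z)) z :=
      (hPz.mul hQYz).neg
    have hGz : HasFDerivAt G
        (pdx u z • fderiv ℝ (pdx (pdy u)) z + pdx (pdy u) z • fderiv ℝ (pdx u) z) z :=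
      hPz.mul hQXz
    rw [hFz.fderiv, hGz.fderiv]
    have symq : fderiv ℝ (pdy (pdy u)) z (1, 0) = fderiv ℝ (pdx (pdy u)) z (0, 1) :=
      (pd_symm hU hQ hz (0, 1) (1, 0))
    have symu : pdy (pdx u) z = pdx (pdy u) z :=
      pd_symm hU (hu.of_le (by norm_num)) hz (1, 0) (0, 1)
    have hma := hMA z hz
    simp only [ContinuousLinearMap.neg_apply, ContinuousLinearMap.add_apply,
      ContinuousLinearMap.smul_apply, smul_eq_mul]
    have e1 : fderiv ℝ (pdx u) z (1, 0) = pdx (pdx u) z := rfl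
    have e2 : fderiv ℝ (pdx u) z (0, 1) = pdy (pdx u) z := rfl
    have e3 : fderiv ℝ (pdy (pdy u)) z (1, 0) = pdx (pdy (pdy u)) z := rfl
    have e4 : fderiv ℝ (pdx (pdy u)) z (0, 1) = pdy (pdx (pdy u)) z := rfl
    rw [e1, e2, symq, e2] at *
    linear_combination -hma - pdy (pdx u) z * symu
  -- continuity of boundary data
  have hPc : ContinuousOn (pdx u) U := hP.continuousOn
  have hQXc : ContinuousOn (pdx (pdy u)) U := hQX.continuousOn
  have hQYc : ContinuousOn (pdy (pdy u)) U := hQY.continuousOn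
  have hrect' : Set.uIcc x₁ x₂ ×ˢ Set.uIcc y₁ y₂ ⊆ U := by
    rwa [uIcc_of_le hx.le, uIcc_of_le hy.le]
  have Hcf : ContinuousOn F (Set.uIcc x₁ x₂ ×ˢ Set.uIcc y₁ y₂) :=
    (((hPc.mono hrect').mul (hQYc.mono hrect')).neg)
  have Hcg : ContinuousOn G (Set.uIcc x₁ x₂ ×ˢ Set.uIcc y₁ y₂) :=
    ((hPc.mono hrect').mul (hQXc.mono hrect'))
  have Hi : IntegrableOn (fun z => fderiv ℝ F z (1, 0) + fderiv ℝ G z (0, 1))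
      (Set.uIcc x₁ x₂ ×ˢ Set.uIcc y₁ y₂) := by
    have hcomp : IsCompact (Set.uIcc x₁ x₂ ×ˢ Set.uIcc y₁ y₂ : Set (ℝ × ℝ)) :=
      isCompact_uIcc.prod isCompact_uIcc
    have hcont : ContinuousOn (fun z => f z ^ 2) (Set.uIcc x₁ x₂ ×ˢ Set.uIcc y₁ y₂) :=
      (hf.mono hrect').pow 2
    have := hcont.integrableOn_compact (μ := volume) hcomp
    exact this.congr_fun (fun z hz => (key z (hrect' hz)).symm)
      (hcomp.isClosed.measurableSet)
  have main := integral2_divergence_prod_of_hasFDerivAt_off_countable F G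
    (fun z => fderiv ℝ F z) (fun z => fderiv ℝ G z) x₁ y₁ x₂ y₂ ∅ countable_empty
    Hcf Hcg
    (fun z hz => (hFd z (hrect' ⟨Set.Ioo_subset_Icc_self hz.1.1, Set.Ioo_subset_Icc_self hz.1.2⟩)).hasFDerivAt)
    (fun z hz => (hGd z (hrect' ⟨Set.Ioo_subset_Icc_self hz.1.1, Set.Ioo_subset_Icc_self hz.1.2⟩)).hasFDerivAt)
    Hi
  have hin : (∫ x in x₁..x₂, ∫ y in y₁..y₂, f (x, y) ^ 2) =
      ∫ x in x₁..x₂, ∫ y in y₁..y₂, fderiv ℝ F (x, y) (1, 0) + fderiv ℝ G (x, y) (0, 1) := by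
    refine intervalIntegral.integral_congr fun x hxm => ?_
    refine intervalIntegral.integral_congr fun y hym => ?_
    exact (key (x, y) (hrect' ⟨hxm, hym⟩)).symm
  rw [hin, main]
  simp only [hF, hG]
  rw [intervalIntegral.integral_neg, intervalIntegral.integral_neg]
  ring
end

section
/- Let U ⊆ ℂ be open and let w : ℂ → ℂ be complex analytic on U. Define u(x,y) = Im(w(x + iy)) for (x,y) with x + iy ∈ U. Then at every such point, u_xx·u_yy − u_xy² = −|w''(x + iy)|², so u solves the hyperbolic Monge–Ampère equation u_xx·u_yy − u_xy² + f² = 0 with f(x,y) = |w''(x + iy)|. -/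
/-- The imaginary part of the composition of an analytic function with `x + iy`,
viewed as a function of two real variables. -/
noncomputable def imPart (w : ℂ → ℂ) (z : ℝ × ℝ) : ℝ :=
  (w ((z.1 : ℂ) + (z.2 : ℂ) * Complex.I)).im

lemma pd_aux (g : ℂ → ℂ) (z : ℝ × ℝ)
    (hg : DifferentiableAt ℂ g ((z.1 : ℂ) + (z.2 : ℂ) * Complex.I)) :
    pdx (fun p => (g ((p.1 : ℂ) + (p.2 : ℂ) * Complex.I)).im) z
        = (deriv g ((z.1 : ℂ) + (z.2 : ℂ) * Complex.I)).im ∧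
    pdy (fun p => (g ((p.1 : ℂ) + (p.2 : ℂ) * Complex.I)).im) z
        = (deriv g ((z.1 : ℂ) + (z.2 : ℂ) * Complex.I)).re ∧
    pdx (fun p => (g ((p.1 : ℂ) + (p.2 : ℂ) * Complex.I)).re) z
        = (deriv g ((z.1 : ℂ) + (z.2 : ℂ) * Complex.I)).re ∧
    pdy (fun p => (g ((p.1 : ℂ) + (p.2 : ℂ) * Complex.I)).re) z
        = -(deriv g ((z.1 : ℂ) + (z.2 : ℂ) * Complex.I)).im := by
  set c : ℂ := (z.1 : ℂ) + (z.2 : ℂ) * Complex.I with hc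
  set L : ℝ × ℝ →L[ℝ] ℂ := Complex.equivRealProdCLM.symm.toContinuousLinearMap with hL
  have hLapp : ∀ p : ℝ × ℝ, L p = (p.1 : ℂ) + (p.2 : ℂ) * Complex.I := by
    intro p; exact Complex.equivRealProdCLM_symm_apply p
  have hLz : L z = c := hLapp z
  have h2 : HasFDerivAt g ((fderiv ℂ g c).restrictScalars ℝ) (L z) := by
    rw [hLz]; exact (hg.hasFDerivAt).restrictScalars ℝ
  have hh : HasFDerivAt (fun p : ℝ × ℝ => g ((p.1 : ℂ) + (p.2 : ℂ) * Complex.I))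
      (((fderiv ℂ g c).restrictScalars ℝ).comp L) z := by
    have := h2.comp z L.hasFDerivAt
    refine this.congr_of_eventuallyEq ?_
    filter_upwards with p
    simp [Function.comp, hLapp p]
  have him : HasFDerivAt (fun p : ℝ × ℝ => (g ((p.1 : ℂ) + (p.2 : ℂ) * Complex.I)).im)
      (Complex.imCLM.comp (((fderiv ℂ g c).restrictScalars ℝ).comp L)) z :=
    (Complex.imCLM.hasFDerivAt).comp z hh
  have hre : HasFDerivAt (fun p : ℝ × ℝ => (g ((p.1 : ℂ) + (p.2 : ℂ) * Complex.I)).re)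
      (Complex.reCLM.comp (((fderiv ℂ g c).restrictScalars ℝ).comp L)) z :=
    (Complex.reCLM.hasFDerivAt).comp z hh
  have e1 : L (1, 0) = 1 := by rw [hLapp]; simp
  have e2 : L (0, 1) = Complex.I := by rw [hLapp]; simp
  have hd1 : (fderiv ℂ g c) 1 = deriv g c := by
    simp [fderiv_apply_one_eq_deriv]
  have hdI : (fderiv ℂ g c) Complex.I = Complex.I * deriv g c := by
    have : (fderiv ℂ g c) (Complex.I • (1:ℂ)) = Complex.I • ((fderiv ℂ g c) 1) :=
      (fderiv ℂ g c).map_smul _ _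
    simp only [smul_eq_mul, mul_one] at this; rw [this, hd1]
  refine ⟨?_, ?_, ?_, ?_⟩
  · rw [pdx, him.fderiv]; simp [e1, hd1]
  · rw [pdy, him.fderiv]; simp [e2, hdI]
  · rw [pdx, hre.fderiv]; simp [e1, hd1]
  · rw [pdy, hre.fderiv]; simp [e2, hdI]

/-- If `w` is complex analytic on an open set `U` and `u(x,y) = Im(w(x+iy))`,
then `u_xx·u_yy − u_xy² = −|w''|²`; in particular `u` solves the hyperbolic
Monge–Ampère equation `u_xx·u_yy − u_xy² + f² = 0` with `f = |w''|`. -/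
theorem imPart_solves_monge_ampere
    (U : Set ℂ) (hU : IsOpen U) (w : ℂ → ℂ) (hw : DifferentiableOn ℂ w U) :
    ∀ x y : ℝ, (x : ℂ) + (y : ℂ) * Complex.I ∈ U →
      pdx (pdx (imPart w)) (x, y) * pdy (pdy (imPart w)) (x, y) -
          pdy (pdx (imPart w)) (x, y) ^ 2 =
        -(‖deriv (deriv w) ((x : ℂ) + (y : ℂ) * Complex.I)‖ ^ 2) ∧
      pdx (pdx (imPart w)) (x, y) * pdy (pdy (imPart w)) (x, y) -
          pdy (pdx (imPart w)) (x, y) ^ 2 +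
          ‖deriv (deriv w) ((x : ℂ) + (y : ℂ) * Complex.I)‖ ^ 2 = 0 := by
  intro x y hmem
  set c : ℂ := (x : ℂ) + (y : ℂ) * Complex.I with hc
  have hAn : AnalyticOnNhd ℂ w U := hw.analyticOnNhd hU
  have hAn' : AnalyticOnNhd ℂ (deriv w) U := hAn.deriv
  -- neighborhood of (x,y) mapping into U
  have hcont : Continuous (fun p : ℝ × ℝ => (p.1 : ℂ) + (p.2 : ℂ) * Complex.I) := by
    continuity
  have hopen : IsOpen {p : ℝ × ℝ | (p.1 : ℂ) + (p.2 : ℂ) * Complex.I ∈ U} :=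
    hU.preimage hcont
  have hmem' : (x, y) ∈ {p : ℝ × ℝ | (p.1 : ℂ) + (p.2 : ℂ) * Complex.I ∈ U} := hmem
  have hnhds := hopen.mem_nhds hmem'
  have hdiffat : ∀ p : ℝ × ℝ, (p.1 : ℂ) + (p.2 : ℂ) * Complex.I ∈ U →
      DifferentiableAt ℂ w ((p.1 : ℂ) + (p.2 : ℂ) * Complex.I) := fun p hp =>
    (hAn ((p.1 : ℂ) + (p.2 : ℂ) * Complex.I) hp).differentiableAt
  have hd'c : DifferentiableAt ℂ (deriv w) c := (hAn' c hmem).differentiableAt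
  -- first derivatives eventually
  have hx : pdx (imPart w) =ᶠ[nhds (x, y)]
      fun p => (deriv w ((p.1 : ℂ) + (p.2 : ℂ) * Complex.I)).im := by
    filter_upwards [hnhds] with p hp
    exact (pd_aux w p (hdiffat p hp)).1
  have hy : pdy (imPart w) =ᶠ[nhds (x, y)]
      fun p => (deriv w ((p.1 : ℂ) + (p.2 : ℂ) * Complex.I)).re := by
    filter_upwards [hnhds] with p hp
    exact (pd_aux w p (hdiffat p hp)).2.1
  have hxx : pdx (pdx (imPart w)) (x, y) = (deriv (deriv w) c).im := by
    rw [pdx, hx.fderiv_eq]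
    exact (pd_aux (deriv w) (x, y) hd'c).1
  have hxy : pdy (pdx (imPart w)) (x, y) = (deriv (deriv w) c).re := by
    rw [pdy, hx.fderiv_eq]
    exact (pd_aux (deriv w) (x, y) hd'c).2.1
  have hyy : pdy (pdy (imPart w)) (x, y) = -(deriv (deriv w) c).im := by
    rw [pdy, hy.fderiv_eq]
    exact (pd_aux (deriv w) (x, y) hd'c).2.2.2
  have habs : (‖deriv (deriv w) c‖) ^ 2 =
      (deriv (deriv w) c).re ^ 2 + (deriv (deriv w) c).im ^ 2 := by
    rw [Complex.sq_norm, Complex.normSq_apply]; ring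
  constructor
  · rw [hxx, hxy, hyy, habs]; ring
  · rw [hxx, hxy, hyy, habs]; ring
end
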